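/- arXiv:2003.06328 — 2 statements merged into one kernel-verified Lean document; each statement's English description precedes it below -/
import Mathlib

section
/- Let Y ⊆ 𝒜^ℤ be a subshift and let τ: 𝒜* → ℬ* be a non-erasing morphism. Then there exist a finite alphabet 𝒞, a non-erasing morphism σ: 𝒜* → 𝒞* that is recognizable in Y for aperiodic points, and a map ψ: 𝒞 → ℬ (extended to a letter-to-letter morphism 𝒞* → ℬ*) such that τ = ψ ∘ σ. -/
open Filter Topology
open scoped ENNReal

section Defs

variable {A B C : Type*}

/-- The shift of a two-sided sequence by `k`. -/
def shiftBy (k : ℤ) (x : ℤ → A) : ℤ → A := fun n => x (n + k)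

/-- The finite word `x_m x_{m+1} ⋯ x_{m+len-1}` read in the two-sided sequence `x`. -/
def factorAt (x : ℤ → A) (m : ℤ) (len : ℕ) : List A :=
  (List.range len).map fun i => x (m + (i : ℤ))

/-- Extension of a morphism (given on letters) to finite words. -/
def wordImage (τ : A → List B) (w : List A) : List B := (w.map τ).flatten

/-- Composition of two morphisms. -/
def morphComp (σ : B → List C) (τ : A → List B) : A → List C :=
  fun a => wordImage σ (τ a)

/-- A morphism is non-erasing if no letter is sent to the empty word. -/
def NonErasing (τ : A → List B) : Prop := ∀ a, τ a ≠ []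

/-- A morphism is positive if every target letter occurs in the image of each letter. -/
def PositiveMorph (τ : A → List B) : Prop := ∀ a : A, ∀ b : B, b ∈ τ a

/-- A morphism is proper if all images start with the same letter and end with the same letter. -/
def ProperMorph (τ : A → List B) : Prop :=
  ∃ b b' : B, ∀ a : A, (τ a).head? = some b ∧ (τ a).getLast? = some b'

/-- Cumulative lengths of the images `τ(y_0 ⋯ y_{n-1})` (or the negative part for `n < 0`). -/
def cumLen (τ : A → List B) (y : ℤ → A) (n : ℤ) : ℤ :=
  if 0 ≤ n then ∑ i ∈ Finset.range n.toNat, ((τ (y (i : ℤ))).length : ℤ)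
  else -∑ i ∈ Finset.range (-n).toNat, ((τ (y (-(i : ℤ) - 1))).length : ℤ)

/-- `z` is the two-sided concatenation of the images of the letters of `y` under `τ`,
the image of the 0-th coordinate starting at coordinate 0. -/
def IsSeqImage (τ : A → List B) (y : ℤ → A) (z : ℤ → B) : Prop :=
  ∀ (n : ℤ) (j : Fin (τ (y n)).length), z (cumLen τ y n + ((j : ℕ) : ℤ)) = (τ (y n)).get j

/-- `(k, y)` is a centered `τ`-representation of `x` in `Y`. -/
def IsCenteredRep (τ : A → List B) (Y : Set (ℤ → A)) (x : ℤ → B) (k : ℕ) (y : ℤ → A) : Prop :=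
  y ∈ Y ∧ k < (τ (y 0)).length ∧ ∃ z, IsSeqImage τ y z ∧ x = shiftBy (k : ℤ) z

/-- `τ` is recognizable in `Y`: every point has at most one centered `τ`-representation in `Y`. -/
def RecognizableIn (τ : A → List B) (Y : Set (ℤ → A)) : Prop :=
  ∀ (x : ℤ → B) (k k' : ℕ) (y y' : ℤ → A),
    IsCenteredRep τ Y x k y → IsCenteredRep τ Y x k' y' → k = k' ∧ y = y'

/-- A two-sided sequence is aperiodic for the shift. -/
def AperiodicPoint (x : ℤ → A) : Prop := ∀ k : ℤ, k ≠ 0 → shiftBy k x ≠ x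

/-- `τ` is recognizable in `Y` for aperiodic points. -/
def RecognizableInForAperiodic (τ : A → List B) (Y : Set (ℤ → A)) : Prop :=
  ∀ (x : ℤ → B) (k k' : ℕ) (y y' : ℤ → A), AperiodicPoint x →
    IsCenteredRep τ Y x k y → IsCenteredRep τ Y x k' y' → k = k' ∧ y = y'

/-- A subshift: a closed shift-invariant subset of `A^ℤ`. -/
def IsSubshift [TopologicalSpace A] (X : Set (ℤ → A)) : Prop :=
  IsClosed X ∧ ∀ k : ℤ, ∀ x ∈ X, shiftBy k x ∈ X

/-- A minimal subshift: nonempty and every orbit is dense in it. -/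
def MinimalSubshift [TopologicalSpace A] (X : Set (ℤ → A)) : Prop :=
  IsSubshift X ∧ X.Nonempty ∧ ∀ x ∈ X, X ⊆ closure {z | ∃ k : ℤ, z = shiftBy k x}

/-- `X` is the smallest subshift containing `τ(Y)`. -/
def IsSmallestSubshiftContaining [TopologicalSpace B] (τ : A → List B)
    (Y : Set (ℤ → A)) (X : Set (ℤ → B)) : Prop :=
  IsSubshift X ∧ (∀ y ∈ Y, ∀ z, IsSeqImage τ y z → z ∈ X) ∧
    ∀ X' : Set (ℤ → B), IsSubshift X' → (∀ y ∈ Y, ∀ z, IsSeqImage τ y z → z ∈ X') → X ⊆ X'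

/-- The language of a subshift. -/
def langOf (X : Set (ℤ → A)) : Set (List A) :=
  {w | ∃ x ∈ X, ∃ m : ℤ, factorAt x m w.length = w}

/-- The complexity function of a subshift. -/
noncomputable def complexity (X : Set (ℤ → A)) (n : ℕ) : ℕ :=
  Set.ncard {w : List A | w.length = n ∧ w ∈ langOf X}

/-- `‖τ‖`, the maximal length of the image of a letter. -/
noncomputable def normSup (τ : A → List B) : ℕ := sSup (Set.range fun a => (τ a).length)

/-- `⟨τ⟩`, the minimal length of the image of a letter. -/
noncomputable def normInf (τ : A → List B) : ℕ := sInf (Set.range fun a => (τ a).length)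

/-- The language of `θ(A^ℤ)`: finite words occurring in two-sided images under `θ`. -/
def morphLang (θ : A → List C) : Set (List C) :=
  {w | ∃ (x : ℤ → A) (z : ℤ → C) (m : ℤ), IsSeqImage θ x z ∧ factorAt z m w.length = w}

/-- `p_{θ(A^ℤ)}(n)`: number of words of length `n` occurring in two-sided images under `θ`. -/
noncomputable def morphComplexity (θ : A → List C) (n : ℕ) : ℕ :=
  Set.ncard {w : List C | w.length = n ∧ w ∈ morphLang θ}

/-- The set `F(b, n, σ, L)` of right extensions of `b` in `L`. -/
def Fset (σ : B → List C) (b : B) (n : ℕ) (L : Set (List B)) : Set (List B) :=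
  {w | w ∈ L ∧ (b :: w) ∈ L ∧ w.head? ≠ some b ∧
    (wordImage σ w.dropLast).length < n ∧ n ≤ (wordImage σ w).length}

/-- `τ(A^i)`: images under `τ` of words of length `i`. -/
def imagesOfLen (τ : A → List B) (i : ℕ) : Set (List B) :=
  {w | ∃ u : List A, u.length = i ∧ wordImage τ u = w}

/-- `Comp_i(σ|τ)(n)`, the `i`-th complexity of `σ` with respect to `τ`. -/
noncomputable def relCompI [Fintype B] (σ : B → List C) (τ : A → List B) (i n : ℕ) : ℕ :=
  ∑ b : B, (Fset σ b n (imagesOfLen τ i)).ncard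

/-- `Comp(σ|τ)(n)`, the complexity of `σ` with respect to `τ`. -/
noncomputable def relComp [Fintype B] (σ : B → List C) (τ : A → List B) (n : ℕ) : ℕ :=
  ∑ b : B, (Fset σ b n (morphLang τ)).ncard

/-- Number of maximal blocks of a single repeated letter in a word. -/
def blockCount [DecidableEq B] : List B → ℕ
  | [] => 0
  | [_] => 1
  | a :: b :: l => (if a = b then 0 else 1) + blockCount (b :: l)

/-- The repetition complexity `r-comp(τ)` of a morphism. -/
noncomputable def rcomp [Fintype A] [DecidableEq B] (τ : A → List B) : ℕ :=
  ∑ a : A, blockCount (τ a)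

/-- Two two-sided sequences are left asymptotic. -/
def LeftAsymptotic (x y : ℤ → A) : Prop :=
  ∃ N : ℕ, ∀ k : ℕ, N ≤ k → x (-(k : ℤ)) = y (-(k : ℤ))

/-- The shift orbits of `x` and `y` are asymptotic. -/
def OrbitsAsymptotic (x y : ℤ → A) : Prop :=
  ∃ k k' : ℤ, LeftAsymptotic (shiftBy k x) (shiftBy k' y)

/-- A finite set `W` of non-empty words is recognizable in the subshift `X`. -/
def WordSetRecognizable [TopologicalSpace B] (W : Set (List B)) (X : Set (ℤ → B)) : Prop :=
  ∃ (A' : Type) (_ : Fintype A') (Y : Set (ℤ → A')) (τ : A' → List B),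
    Set.range τ = W ∧ NonErasing τ ∧ (@IsSubshift A' ⊥ Y) ∧
    IsSmallestSubshiftContaining τ Y X ∧ RecognizableIn τ Y

end Defs

section Seq

variable {A : ℕ → Type*}

/-- `τ_{[0,n]} = τ_0 ∘ τ_1 ∘ ⋯ ∘ τ_n`. -/
def compSeq (τ : ∀ n, A (n+1) → List (A n)) : ∀ n, A (n+1) → List (A 0)
  | 0 => τ 0
  | n+1 => fun a => wordImage (compSeq τ n) (τ (n+1) a)

/-- `τ_{[n, n+k]} = τ_n ∘ ⋯ ∘ τ_{n+k}`. -/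
def compFrom (τ : ∀ n, A (n+1) → List (A n)) (n : ℕ) : ∀ k, A (n+k+1) → List (A n)
  | 0 => τ n
  | k+1 => fun a => wordImage (compFrom τ n k) (τ (n+k+1) a)

/-- The S-adic subshift generated by the directive sequence `τ`. -/
def sadicSubshift (τ : ∀ n, A (n+1) → List (A n)) : Set (ℤ → A 0) :=
  {x | ∀ (m : ℤ) (len : ℕ), ∃ (n : ℕ) (a : A (n+1)), factorAt x m len <:+: compSeq τ n a}

/-- The level-`n` subshift `X_τ^{(n)}` of the directive sequence `τ`. -/
def levelSubshift (τ : ∀ n, A (n+1) → List (A n)) (n : ℕ) : Set (ℤ → A n) :=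
  {x | ∀ (m : ℤ) (len : ℕ), ∃ (k : ℕ) (a : A (n+k+1)), factorAt x m len <:+: compFrom τ n k a}

end Seq

section Aux

variable {A B : Type*}

lemma cumLen_zero (τ : A → List B) (y : ℤ → A) : cumLen τ y 0 = 0 := by
  simp [cumLen]

lemma cumLen_succ (τ : A → List B) (y : ℤ → A) (n : ℤ) :
    cumLen τ y (n + 1) = cumLen τ y n + ((τ (y n)).length : ℤ) := by
  unfold cumLen
  rcases le_or_gt 0 n with hn | hn
  · rw [if_pos hn, if_pos (by omega)]
    have h1 : (n + 1).toNat = n.toNat + 1 := by omega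
    rw [h1, Finset.sum_range_succ, Int.toNat_of_nonneg hn]
  · rw [if_neg (show ¬ 0 ≤ n by omega)]
    rcases eq_or_lt_of_le (by omega : n + 1 ≤ 0) with h0 | h0
    · have : n = -1 := by omega
      subst this
      norm_num [Finset.sum_range_one]
    · rw [if_neg (show ¬ 0 ≤ n + 1 by omega)]
      have h1 : (-n).toNat = (-(n + 1)).toNat + 1 := by omega
      rw [h1, Finset.sum_range_succ]
      have h2 : (-(((-(n + 1)).toNat : ℤ)) - 1) = n := by omega
      rw [h2]
      ring

/-- The marking morphism used in the Donoso trick. -/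
def markMorph (τ : A → List B) : A → List (Σ a : A, Fin (τ a).length) :=
  fun a => List.ofFn fun i : Fin (τ a).length => (⟨a, i⟩ : Σ a : A, Fin (τ a).length)

lemma markMorph_length (τ : A → List B) (a : A) :
    (markMorph τ a).length = (τ a).length := by
  simp [markMorph]

lemma cumLen_mark (τ : A → List B) (y : ℤ → A) (n : ℤ) :
    cumLen (markMorph τ) y n = cumLen τ y n := by
  simp [cumLen, markMorph_length]

lemma seqImage_eval (τ : A → List B) (y : ℤ → A)
    (z : ℤ → Σ a : A, Fin (τ a).length) (hz : IsSeqImage (markMorph τ) y z)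
    (n : ℤ) (j : ℕ) (hj : j < (τ (y n)).length) :
    z (cumLen τ y n + (j : ℤ)) = ⟨y n, ⟨j, hj⟩⟩ := by
  have hj' : j < (markMorph τ (y n)).length := by rwa [markMorph_length]
  have := hz n ⟨j, hj'⟩
  rw [cumLen_mark] at this
  simpa [markMorph, List.get_ofFn] using this

end Aux

/-- every non-erasing morphism factors as a letter-to-letter morphism composed
with a morphism recognizable for aperiodic points (Lemma `lem:DonosoTrick`). -/
theorem stmt5 {A B : Type} [Fintype A] [Fintype B]
    [TopologicalSpace A] [DiscreteTopology A]
    (Y : Set (ℤ → A)) (hY : IsSubshift Y)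
    (τ : A → List B) (hτ : NonErasing τ) :
    ∃ (C : Type) (_ : Fintype C) (σ : A → List C) (ψ : C → B),
      NonErasing σ ∧ RecognizableInForAperiodic σ Y ∧ ∀ a : A, τ a = (σ a).map ψ := by
  classical
  refine ⟨(Σ a : A, Fin (τ a).length), inferInstance, markMorph τ,
    fun c => (τ c.1).get c.2, ?_, ?_, ?_⟩
  · -- non-erasing
    intro a h
    have := markMorph_length τ a
    rw [h] at this
    exact hτ a (List.length_eq_zero_iff.mp this.symm)
  · -- recognizable
    intro x k k' y y' _ hR hR'
    obtain ⟨hyY, hk, z, hz, hx⟩ := hR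
    obtain ⟨hyY', hk', z', hz', hx'⟩ := hR'
    rw [markMorph_length] at hk hk'
    -- express z, z' in terms of x
    have hzx : ∀ m : ℤ, z m = x (m - k) := by
      intro m
      rw [hx]
      simp [shiftBy]
    have hzx' : ∀ m : ℤ, z' m = x (m - k') := by
      intro m
      rw [hx']
      simp [shiftBy]
    -- k = k' and y 0 = y' 0
    have e0 : z (k : ℤ) = ⟨y 0, ⟨k, hk⟩⟩ := by
      have := seqImage_eval τ y z hz 0 k hk
      rwa [cumLen_zero, zero_add] at this
    have e0' : z' (k' : ℤ) = ⟨y' 0, ⟨k', hk'⟩⟩ := by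
      have := seqImage_eval τ y' z' hz' 0 k' hk'
      rwa [cumLen_zero, zero_add] at this
    have ex : (⟨y 0, ⟨k, hk⟩⟩ : Σ a : A, Fin (τ a).length) = ⟨y' 0, ⟨k', hk'⟩⟩ := by
      rw [← e0, ← e0', hzx, hzx']
      norm_num
    have hy00 : y 0 = y' 0 := congrArg Sigma.fst ex
    have hkk : k = k' := by
      simpa using congrArg (fun c : (Σ a : A, Fin (τ a).length) => (c.2 : ℕ)) ex
    subst hkk
    refine ⟨rfl, ?_⟩
    -- z = z'
    have hzz : z = z' := by
      funext m
      rw [hzx, hzx']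
    subst hzz
    -- induction claim
    have key : ∀ n : ℤ, y n = y' n ∧ cumLen τ y n = cumLen τ y' n := by
      have step_up : ∀ n : ℤ, cumLen τ y n = cumLen τ y' n → y n = y' n := by
        intro n hc
        have h1 : (τ (y n)).length ≠ 0 := fun h =>
          hτ (y n) (List.length_eq_zero_iff.mp h)
        have h2 : (τ (y' n)).length ≠ 0 := fun h =>
          hτ (y' n) (List.length_eq_zero_iff.mp h)
        have e1 := seqImage_eval τ y z hz n 0 (Nat.pos_of_ne_zero h1)
        have e2 := seqImage_eval τ y' z hz' n 0 (Nat.pos_of_ne_zero h2)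
        rw [hc] at e1
        rw [e1] at e2
        exact congrArg Sigma.fst e2
      have step_down : ∀ n : ℤ, cumLen τ y (n + 1) = cumLen τ y' (n + 1) →
          y n = y' n ∧ cumLen τ y n = cumLen τ y' n := by
        intro n hc
        set L := (τ (y n)).length with hL
        set L' := (τ (y' n)).length with hL'
        have h1 : L ≠ 0 := fun h => hτ (y n) (List.length_eq_zero_iff.mp h)
        have h2 : L' ≠ 0 := fun h => hτ (y' n) (List.length_eq_zero_iff.mp h)
        have e1 := seqImage_eval τ y z hz n (L - 1) (by omega)
        have e2 := seqImage_eval τ y' z hz' n (L' - 1) (by omega)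
        have c1 : cumLen τ y n + ((L - 1 : ℕ) : ℤ) = cumLen τ y (n + 1) - 1 := by
          rw [cumLen_succ]
          omega
        have c2 : cumLen τ y' n + ((L' - 1 : ℕ) : ℤ) = cumLen τ y' (n + 1) - 1 := by
          rw [cumLen_succ]
          omega
        rw [c1] at e1
        rw [c2, ← hc] at e2
        rw [e1] at e2
        have hyn : y n = y' n := congrArg Sigma.fst e2
        refine ⟨hyn, ?_⟩
        have s1 := cumLen_succ τ y n
        have s2 := cumLen_succ τ y' n
        rw [← hyn] at s2
        omega
      intro n
      induction n using Int.induction_on with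
      | zero =>
        refine ⟨hy00, ?_⟩
        rw [cumLen_zero, cumLen_zero]
      | succ i ih =>
        have hc : cumLen τ y (i + 1) = cumLen τ y' (i + 1) := by
          rw [cumLen_succ, cumLen_succ, ih.1, ih.2]
        exact ⟨step_up _ hc, hc⟩
      | pred i ih =>
        have := step_down (-(i : ℤ) - 1) (by
          have : (-(i : ℤ) - 1) + 1 = -(i : ℤ) := by ring
          rw [this]
          exact ih.2)
        constructor
        · have h := this.1
          convert h using 2 <;> ring
        · have h := this.2
          convert h using 2 <;> ring
    funext n
    exact (key n).1
  · -- factorization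
    intro a
    simp only [markMorph, List.map_ofFn]
    exact (List.ofFn_get (τ a)).symm
end

section
/- Let (X,S) be the S-adic subshift generated by a positive directive sequence τ = (τ_n: 𝒜_{n+1}* → 𝒜_n*)_{n≥0}. If liminf_{n→∞} |𝒜_n| ≤ 2, then the complexity of X is sub-quadratic along a subsequence: liminf_{n→∞} p_X(n)/n² = 0. -/
open Filter Topology
open scoped ENNReal

section Aux1
variable {B C D : Type*}

lemma wordImage_cons (θ : B → List C) (x : B) (u : List B) :
    wordImage θ (x :: u) = θ x ++ wordImage θ u := by
  simp [wordImage]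

lemma wordImage_append (θ : B → List C) (u v : List B) :
    wordImage θ (u ++ v) = wordImage θ u ++ wordImage θ v := by
  simp [wordImage]

lemma wordImage_singleton (θ : B → List C) (x : B) : wordImage θ [x] = θ x := by
  simp [wordImage]

lemma infix_of_append_append {p w t a r : List C} (h : p ++ w ++ t = a ++ r)
    (hl : a.length ≤ p.length) : w <:+: r := by
  rw [List.append_assoc] at h
  have h' := congrArg (List.drop a.length) h
  rw [List.drop_append, Nat.sub_eq_zero_of_le hl, List.drop_zero] at h'
  rw [List.drop_append, Nat.sub_self, List.drop_length, List.drop_zero,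
    List.nil_append] at h'
  exact ⟨p.drop a.length, t, by rw [List.append_assoc, h']⟩

lemma span (θ : B → List C) :
    ∀ (k : ℕ) (u : List B), u.length ≤ k → ∀ w : List C, w ≠ [] → w <:+: wordImage θ u →
    ∃ s : List B, s ≠ [] ∧ w <:+: wordImage θ s ∧
      (wordImage θ ((s.drop 1).dropLast)).length < w.length := by
  intro k
  induction k with
  | zero =>
    intro u hu w hw hinf
    rw [List.length_eq_zero_iff.mp (Nat.le_zero.mp hu)] at hinf
    exact absurd (List.infix_nil.mp hinf) hw
  | succ k ih =>
    intro u hu w hw hinf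
    by_cases hint : (wordImage θ ((u.drop 1).dropLast)).length < w.length
    · refine ⟨u, ?_, hinf, hint⟩
      rintro rfl
      exact hw (List.infix_nil.mp hinf)
    · push_neg at hint
      match u with
      | [] => exact absurd (List.infix_nil.mp hinf) hw
      | [x] =>
        simp only [List.drop_succ_cons, List.drop_zero, List.dropLast_nil] at hint
        simp only [wordImage, List.map_nil, List.flatten_nil, List.length_nil,
          Nat.le_zero, List.length_eq_zero_iff] at hint
        exact absurd hint hw
      | x :: y :: us =>
        set v : List B := y :: us with hv
        have hvne : v ≠ [] := by simp [hv]
        have e1 : v.dropLast ++ [v.getLast hvne] = v := List.dropLast_append_getLast hvne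
        have hsplit : wordImage θ (x :: v) = wordImage θ (x :: v.dropLast) ++ θ (v.getLast hvne) := by
          conv_lhs => rw [← e1]
          rw [show x :: (v.dropLast ++ [v.getLast hvne]) = (x :: v.dropLast) ++ [v.getLast hvne] by simp,
            wordImage_append, wordImage_singleton]
        obtain ⟨p, t, hpt⟩ := hinf
        rcases le_or_gt (θ x).length p.length with hpx | hpx
        · have hw2 : w <:+: wordImage θ v := by
            rw [wordImage_cons] at hpt
            exact infix_of_append_append hpt hpx
          have hlen : v.length ≤ k := by
            have := hu; simp [hv] at this ⊢; omega
          exact ih v hlen w hw hw2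
        · rcases le_or_gt (θ (v.getLast hvne)).length t.length with hty | hty
          · have hrev : t.reverse ++ w.reverse ++ p.reverse
                = (θ (v.getLast hvne)).reverse ++ (wordImage θ (x :: v.dropLast)).reverse := by
              have := congrArg List.reverse hpt
              rw [hsplit] at this
              simpa [List.reverse_append, List.append_assoc] using this
            have hw2 : w <:+: wordImage θ (x :: v.dropLast) :=
              List.reverse_infix.mp (infix_of_append_append hrev (by simpa using hty))
            have hlen : (x :: v.dropLast).length ≤ k := by
              simp [hv] at hu ⊢; omega
            exact ih _ hlen w hw hw2
          · exfalso
            have hl1 := congrArg List.length hpt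
            rw [hsplit, wordImage_cons] at hl1
            simp only [List.length_append] at hl1
            have hint' : w.length ≤ (wordImage θ v.dropLast).length := by
              simpa using hint
            omega

end Aux1

section Aux2
variable {B C : Type*}

lemma wordImage_nil (θ : B → List C) : wordImage θ [] = [] := rfl

lemma wordImage_wordImage {D : Type*} (σ : C → List D) (ρ : B → List C) (v : List B) :
    wordImage σ (wordImage ρ v) = wordImage (fun a => wordImage σ (ρ a)) v := by
  induction v with
  | nil => rfl
  | cons x u ih => simp [wordImage_cons, wordImage_append, ih]

lemma wordImage_ne_nil {θ : B → List C} (hθ : NonErasing θ) {u : List B} (hu : u ≠ []) :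
    wordImage θ u ≠ [] := by
  cases u with
  | nil => exact absurd rfl hu
  | cons x v => rw [wordImage_cons]; simp [hθ x]

lemma exists_cover_pair {B' : Type*} [Fintype B'] (hB : Nonempty B')
    (hcard : Fintype.card B' ≤ 2) : ∃ b₀ b₁ : B', ∀ b, b = b₀ ∨ b = b₁ := by
  classical
  obtain ⟨b₀⟩ := hB
  by_cases h : ∃ b : B', b ≠ b₀
  · obtain ⟨b₁, hb₁⟩ := h
    refine ⟨b₀, b₁, fun b => ?_⟩
    by_contra hb
    push_neg at hb
    have h3 : ({b₀, b₁, b} : Finset B').card = 3 := by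
      rw [Finset.card_insert_of_notMem (by simp [Ne.symm hb₁, Ne.symm hb.1]),
        Finset.card_insert_of_notMem (by simp [Ne.symm hb.2]), Finset.card_singleton]
    have := Finset.card_le_univ ({b₀, b₁, b} : Finset B')
    rw [h3] at this
    omega
  · push_neg at h
    exact ⟨b₀, b₀, fun b => Or.inl (h b)⟩

lemma infix_wordImage_of_mem (θ : B → List C) {c : B} {v : List B} (h : c ∈ v) :
    θ c <:+: wordImage θ v := by
  induction v with
  | nil => simp at h
  | cons d u ih =>
    rw [wordImage_cons]
    rcases List.mem_cons.mp h with rfl | h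
    · exact (List.prefix_append _ _).isInfix
    · exact (ih h).trans (List.suffix_append _ _).isInfix

lemma length_wordImage_replicate (θ : B → List C) (j : ℕ) (b : B) :
    (wordImage θ (List.replicate j b)).length = j * (θ b).length := by
  induction j with
  | zero => simp [wordImage]
  | succ j ih =>
    rw [List.replicate_succ, wordImage_cons, List.length_append, ih]
    ring

lemma canon (θ : B → List C) (b₀ b₁ : B) (hcov : ∀ b, b = b₀ ∨ b = b₁)
    (hne : NonErasing θ) (hle : (θ b₀).length ≤ (θ b₁).length)
    {w : List C} (hwlen : w.length = (θ b₁).length) (hw : ∃ u, w <:+: wordImage θ u) :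
    ∃ x y : B, ∃ j i : ℕ, j * (θ b₀).length < (θ b₁).length ∧ i < 2 * (θ b₁).length ∧
      w = ((wordImage θ (x :: (List.replicate j b₀ ++ [y]))).drop i).take (θ b₁).length := by
  set m := (θ b₀).length with hm
  set M := (θ b₁).length with hM
  have hm1 : 1 ≤ m := List.length_pos_iff.mpr (hne b₀)
  have hM1 : 1 ≤ M := le_trans hm1 hle
  have hwne : w ≠ [] := by
    intro h; rw [h] at hwlen; simp at hwlen; omega
  obtain ⟨u, hu⟩ := hw
  obtain ⟨s, hsne, hsinf, hsint⟩ := span θ u.length u le_rfl w hwne hu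
  match s, hsne with
  | x :: rest, _ =>
    have hdrop : ((x :: rest).drop 1).dropLast = rest.dropLast := by simp
    rw [hdrop] at hsint
    set mid := rest.dropLast with hmid
    have hmidb : ∀ c ∈ mid, c = b₀ := by
      intro c hc
      rcases hcov c with rfl | rfl
      · rfl
      · exfalso
        have h1 : (θ c).length ≤ (wordImage θ mid).length :=
          (infix_wordImage_of_mem θ hc).length_le
        rw [hwlen] at hsint
        omega
    have hrep : mid = List.replicate mid.length b₀ := List.eq_replicate_length.mpr hmidb
    set j := mid.length with hj
    have hjm : j * m < M := by
      rw [hrep, length_wordImage_replicate] at hsint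
      rw [hwlen] at hsint
      exact hsint
    -- produce a word W = θ(x :: replicate j b₀ ++ [y]) with w <:+: W
    have hWstep : ∃ y : B, w <:+: wordImage θ (x :: (List.replicate j b₀ ++ [y])) := by
      rcases List.eq_nil_or_concat rest with hrest | ⟨d, y, hrest⟩
      · refine ⟨b₀, ?_⟩
        rw [hrest] at hsinf
        have : w <:+: wordImage θ [x] := hsinf
        rw [wordImage_singleton] at this
        rw [wordImage_cons]
        exact this.trans (List.prefix_append _ _).isInfix
      · refine ⟨y, ?_⟩
        have hmid' : mid = d := by rw [hmid, hrest]; simp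
        have : rest = List.replicate j b₀ ++ [y] := by
          rw [hrest, List.concat_eq_append, ← hmid', hrep]
        rw [this] at hsinf
        exact hsinf
    obtain ⟨y, hWinf⟩ := hWstep
    set W := wordImage θ (x :: (List.replicate j b₀ ++ [y])) with hW
    have hWlen : W.length = (θ x).length + j * m + (θ y).length := by
      rw [hW, wordImage_cons, wordImage_append, wordImage_singleton]
      simp [length_wordImage_replicate]
      ring
    have hxM : (θ x).length ≤ M := by rcases hcov x with rfl | rfl; exact hle; exact le_rfl
    have hyM : (θ y).length ≤ M := by rcases hcov y with rfl | rfl; exact hle; exact le_rfl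
    obtain ⟨p, t, hpt⟩ := hWinf
    refine ⟨x, y, j, p.length, hjm, ?_, ?_⟩
    · have := congrArg List.length hpt
      simp only [List.length_append] at this
      rw [hWlen] at this
      rw [hwlen] at this
      omega
    · have h1 : W.drop p.length = w ++ t := by
        rw [← hpt, List.append_assoc, List.drop_left]
      rw [← hW, h1, ← hwlen, List.take_left]

end Aux2

section AuxSeq
variable {A : ℕ → Type*}

lemma compSeq_succ (τ : ∀ n, A (n+1) → List (A n)) (n : ℕ) (a : A (n+2)) :
    compSeq τ (n+1) a = wordImage (compSeq τ n) (τ (n+1) a) := rfl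

lemma compSeq_ne_nil (τ : ∀ n, A (n+1) → List (A n)) (hne : ∀ n, NonErasing (τ n)) :
    ∀ n, NonErasing (compSeq τ n) := by
  intro n
  induction n with
  | zero => exact hne 0
  | succ n ih => exact fun a => wordImage_ne_nil ih (hne (n+1) a)

lemma compSeq_telescope (τ : ∀ n, A (n+1) → List (A n))
    (hpos : ∀ n, 1 ≤ n → PositiveMorph (τ n)) (hA : ∀ n, Nonempty (A n))
    (n : ℕ) (a : A (n+1)) :
    ∀ P, n ≤ P → ∃ c : A (P+1), compSeq τ n a <:+: compSeq τ P c := by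
  intro P hP
  induction P, hP using Nat.le_induction with
  | base => exact ⟨a, List.infix_refl _⟩
  | succ P hP ih =>
    obtain ⟨c, hc⟩ := ih
    obtain ⟨c'⟩ := hA (P+2)
    have hmem : c ∈ τ (P+1) c' := hpos (P+1) (Nat.le_add_left 1 P) c' c
    refine ⟨c', hc.trans ?_⟩
    rw [compSeq_succ]
    exact infix_wordImage_of_mem _ hmem

lemma compSeq_factor (τ : ∀ n, A (n+1) → List (A n)) (P : ℕ) :
    ∀ n, P + 1 ≤ n → ∀ a : A (n+1), ∃ u : List (A (P+1)),
      compSeq τ n a = wordImage (compSeq τ P) u := by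
  intro n hn
  induction n, hn using Nat.le_induction with
  | base => exact fun a => ⟨τ (P+1) a, rfl⟩
  | succ n hn ih =>
    intro a
    choose f hf using ih
    refine ⟨wordImage f (τ (n+1) a), ?_⟩
    rw [compSeq_succ, wordImage_wordImage]
    have : compSeq τ n = fun c => wordImage (compSeq τ P) (f c) := funext hf
    rw [this]

lemma length_factorAt {A0 : Type*} (x : ℤ → A0) (m : ℤ) (len : ℕ) :
    (factorAt x m len).length = len := by
  simp [factorAt, Function.comp_def]

lemma lang_infix_compSeq (τ : ∀ n, A (n+1) → List (A n)) {w : List (A 0)}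
    (hw : w ∈ langOf (sadicSubshift τ)) :
    ∃ (n : ℕ) (a : A (n+1)), w <:+: compSeq τ n a := by
  obtain ⟨x, hx, m, hfac⟩ := hw
  obtain ⟨n, a, hinf⟩ := hx m w.length
  rw [hfac] at hinf
  exact ⟨n, a, hinf⟩

lemma lang_infix_wordImage (τ : ∀ n, A (n+1) → List (A n))
    (hpos : ∀ n, 1 ≤ n → PositiveMorph (τ n)) (hA : ∀ n, Nonempty (A n))
    (P : ℕ) {w : List (A 0)} (hw : w ∈ langOf (sadicSubshift τ)) :
    ∃ u : List (A (P+1)), w <:+: wordImage (compSeq τ P) u := by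
  obtain ⟨n, a, hinf⟩ := lang_infix_compSeq τ hw
  rcases le_or_gt n P with h | h
  · obtain ⟨c, hc⟩ := compSeq_telescope τ hpos hA n a P h
    refine ⟨[c], ?_⟩
    rw [wordImage_singleton]
    exact hinf.trans hc
  · obtain ⟨u, hu⟩ := compSeq_factor τ P n h a
    exact ⟨u, hu ▸ hinf⟩

end AuxSeq


section MainAux

lemma liminf_zero_of_bounded_lang {A0 : Type*} (X : Set (ℤ → A0)) (b : ℕ)
    (hb : ∀ w ∈ langOf X, w.length ≤ b) :
    Filter.liminf
      (fun n : ℕ => (complexity X n : ℝ≥0∞) / ((n : ℝ≥0∞) ^ 2)) Filter.atTop = 0 := by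
  refine le_antisymm ?_ zero_le
  refine Filter.liminf_le_of_frequently_le ?_
  refine (Filter.eventually_atTop.mpr ⟨b+1, fun q hq => ?_⟩).frequently
  have hz : complexity X q = 0 := by
    have hempty : {w : List A0 | w.length = q ∧ w ∈ langOf X} = ∅ := by
      ext w
      simp only [Set.mem_setOf_eq, Set.mem_empty_iff_false, iff_false, not_and]
      intro h1 h2
      have := hb w h2
      omega
    rw [complexity, hempty, Set.ncard_empty]
  simp [hz]

variable {A : ℕ → Type} [∀ n, Fintype (A n)]

lemma level_bound (τ : ∀ n, A (n+1) → List (A n)) (hne : ∀ n, NonErasing (τ n))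
    (hpos : ∀ n, 1 ≤ n → PositiveMorph (τ n)) (hA : ∀ n, Nonempty (A n))
    (P : ℕ) (hcard : Fintype.card (A (P+1)) ≤ 2) :
    ∃ m M : ℕ, (∃ a₀ : A (P+1), m = (compSeq τ P a₀).length) ∧ 1 ≤ m ∧ m ≤ M ∧
      complexity (sadicSubshift τ) M * m ≤ 16 * M^2 := by
  classical
  obtain ⟨b₀', b₁', hcov'⟩ := exists_cover_pair (hA (P+1)) hcard
  set θ := compSeq τ P with hθ
  obtain ⟨b₀, b₁, hcov, hle⟩ :
      ∃ b₀ b₁ : A (P+1), (∀ b, b = b₀ ∨ b = b₁) ∧ (θ b₀).length ≤ (θ b₁).length := by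
    rcases le_total (θ b₀').length (θ b₁').length with h | h
    · exact ⟨b₀', b₁', hcov', h⟩
    · exact ⟨b₁', b₀', fun b => (hcov' b).symm, h⟩
  have hθne : NonErasing θ := compSeq_ne_nil τ hne P
  set m := (θ b₀).length with hmdef
  set M := (θ b₁).length with hMdef
  have hm1 : 1 ≤ m := List.length_pos_iff.mpr (hθne b₀)
  refine ⟨m, M, ⟨b₀, rfl⟩, hm1, hle, ?_⟩
  set F : Finset (List (A 0)) :=
    ((Finset.univ ×ˢ Finset.univ ×ˢ Finset.range ((M-1)/m + 1) ×ˢ Finset.range (2*M)).image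
      fun q : A (P+1) × A (P+1) × ℕ × ℕ =>
        ((wordImage θ (q.1 :: (List.replicate q.2.2.1 b₀ ++ [q.2.1]))).drop q.2.2.2).take M)
    with hF
  have hsub : {w : List (A 0) | w.length = M ∧ w ∈ langOf (sadicSubshift τ)} ⊆ ↑F := by
    rintro w ⟨hwlen, hwlang⟩
    obtain ⟨u, hu⟩ := lang_infix_wordImage τ hpos hA P hwlang
    obtain ⟨x, y, j, i, hjm, hi, hweq⟩ := canon θ b₀ b₁ hcov hθne hle hwlen ⟨u, hu⟩
    refine Finset.mem_coe.mpr (Finset.mem_image.mpr ⟨(x, y, j, i), ?_, hweq.symm⟩)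
    simp only [Finset.mem_product, Finset.mem_univ, Finset.mem_range, true_and]
    have hjm' : j * m < M := hjm
    have hjle : j ≤ (M-1)/m := (Nat.le_div_iff_mul_le hm1).mpr (by omega)
    exact ⟨by omega, hi⟩
  have hcount : complexity (sadicSubshift τ) M ≤ 4 * (((M-1)/m + 1) * (2*M)) := by
    calc complexity (sadicSubshift τ) M ≤ F.card := by
          rw [← Set.ncard_coe_finset]
          exact Set.ncard_le_ncard hsub F.finite_toSet
      _ ≤ ((Finset.univ : Finset (A (P+1))) ×ˢ (Finset.univ : Finset (A (P+1))) ×ˢ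
            Finset.range ((M-1)/m + 1) ×ˢ Finset.range (2*M)).card := Finset.card_image_le
      _ ≤ 4 * (((M-1)/m + 1) * (2*M)) := by
          rw [Finset.card_product, Finset.card_product, Finset.card_product,
            Finset.card_range, Finset.card_range, Finset.card_univ]
          calc Fintype.card (A (P+1)) * (Fintype.card (A (P+1)) * (((M-1)/m + 1) * (2*M)))
              ≤ 2 * (2 * (((M-1)/m + 1) * (2*M))) :=
                Nat.mul_le_mul hcard (Nat.mul_le_mul hcard le_rfl)
            _ = 4 * (((M-1)/m + 1) * (2*M)) := by ring
  have h1 : ((M-1)/m + 1) * m ≤ 2*M := by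
    have := Nat.div_mul_le_self (M-1) m
    rw [add_mul, one_mul]
    omega
  calc complexity (sadicSubshift τ) M * m ≤ (4 * (((M-1)/m + 1) * (2*M))) * m :=
        Nat.mul_le_mul_right m hcount
    _ = 8 * M * (((M-1)/m + 1) * m) := by ring
    _ ≤ 8 * M * (2 * M) := Nat.mul_le_mul_left _ h1
    _ = 16 * M^2 := by ring

end MainAux

/-- an S-adic subshift of alphabet rank at most 2 has sub-quadratic complexity
along a subsequence (Corollary `cor:SadicNonSuperQuadra`). -/
theorem stmt13 {A : ℕ → Type} [∀ n, Fintype (A n)]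
    (τ : ∀ n, A (n+1) → List (A n)) (hne : ∀ n, NonErasing (τ n))
    (hpos : ∀ n, 1 ≤ n → PositiveMorph (τ n))
    (h : Filter.liminf (fun n => ((Fintype.card (A n) : ℕ∞))) Filter.atTop ≤ 2) :
    Filter.liminf
      (fun n : ℕ => (complexity (sadicSubshift τ) n : ℝ≥0∞) / ((n : ℝ≥0∞) ^ 2))
      Filter.atTop = 0 := by
  classical
  have hfreq : ∀ K : ℕ, ∃ N, K ≤ N ∧ Fintype.card (A N) ≤ 2 := by
    intro K
    by_contra hcon
    push_neg at hcon
    have h3 : (3 : ℕ∞) ≤ Filter.liminf (fun n => ((Fintype.card (A n) : ℕ∞))) Filter.atTop := by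
      refine Filter.le_liminf_of_le (by isBoundedDefault)
        (Filter.eventually_atTop.mpr ⟨K, fun n hn => ?_⟩)
      have := hcon n hn
      exact_mod_cast this
    exact absurd (le_trans h3 h) (by decide)
  by_cases hA : ∀ n, Nonempty (A n)
  · by_cases hbd : ∀ b : ℕ, ∃ P : ℕ, ∀ a : A (P+1), b ≤ (compSeq τ P a).length
    · -- main case
      refine le_antisymm ?_ zero_le
      have key : ∀ ε : NNReal, 0 < ε →
          Filter.liminf
            (fun n : ℕ => (complexity (sadicSubshift τ) n : ℝ≥0∞) / ((n : ℝ≥0∞) ^ 2))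
            Filter.atTop ≤ (ε : ℝ≥0∞) := by
        intro ε hε
        refine Filter.liminf_le_of_frequently_le (Filter.frequently_atTop.mpr fun K => ?_)
        obtain ⟨c, hc⟩ : ∃ c : ℕ, (16 : ℝ≥0∞) ≤ (ε : ℝ≥0∞) * c := by
          refine ⟨⌈(16 : NNReal) / ε⌉₊, ?_⟩
          have h1 : (16 : NNReal) / ε ≤ (⌈(16 : NNReal) / ε⌉₊ : NNReal) := Nat.le_ceil _
          have h2 : (16 : NNReal) ≤ ε * ⌈(16 : NNReal) / ε⌉₊ := by
            calc (16 : NNReal) = 16 / ε * ε := (div_mul_cancel₀ 16 (ne_of_gt hε)).symm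
              _ ≤ (⌈(16 : NNReal) / ε⌉₊ : NNReal) * ε := mul_le_mul_left h1 ε
              _ = ε * ⌈(16 : NNReal) / ε⌉₊ := mul_comm _ _
          exact_mod_cast h2
        set b := max c K with hb
        obtain ⟨P₁, h₁⟩ := hbd b
        have hmono : ∀ P, P₁ ≤ P → ∀ a : A (P+1), b ≤ (compSeq τ P a).length := by
          intro P hP
          induction P, hP using Nat.le_induction with
          | base => exact h₁
          | succ P hP ih =>
            intro a
            obtain ⟨c', hc'⟩ := List.exists_mem_of_ne_nil _ (hne (P+1) a)
            calc b ≤ (compSeq τ P c').length := ih c'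
              _ ≤ (wordImage (compSeq τ P) (τ (P+1) a)).length :=
                  (infix_wordImage_of_mem _ hc').length_le
              _ = (compSeq τ (P+1) a).length := by rw [compSeq_succ]
        obtain ⟨N, hN1, hN2⟩ := hfreq (P₁ + 1)
        obtain ⟨P, rfl⟩ : ∃ P, N = P + 1 := ⟨N - 1, by omega⟩
        have hP : P₁ ≤ P := by omega
        obtain ⟨m, M, ⟨a₀, ha₀⟩, hm1, hmM, hbound⟩ := level_bound τ hne hpos hA P hN2
        have hbm : b ≤ m := ha₀ ▸ hmono P hP a₀
        refine ⟨M, by omega, ?_⟩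
        have hM1 : 1 ≤ M := le_trans hm1 hmM
        have hM0 : ((M : ℝ≥0∞)) ^ 2 ≠ 0 := by
          simp only [ne_eq, pow_eq_zero_iff, Nat.cast_eq_zero, OfNat.ofNat_ne_zero, not_false_iff]
          omega
        have hMtop : ((M : ℝ≥0∞)) ^ 2 ≠ ⊤ := by
          exact ENNReal.pow_ne_top (ENNReal.natCast_ne_top M)
        rw [ENNReal.div_le_iff_le_mul (Or.inl hM0) (Or.inl hMtop)]
        have hcast : (complexity (sadicSubshift τ) M : ℝ≥0∞) * (m : ℝ≥0∞)
            ≤ 16 * ((M : ℝ≥0∞)) ^ 2 := by exact_mod_cast hbound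
        have hcm : (c : ℝ≥0∞) ≤ (m : ℝ≥0∞) := by
          have : c ≤ m := le_trans (le_max_left c K) hbm
          exact_mod_cast this
        have h16 : (16 : ℝ≥0∞) ≤ (ε : ℝ≥0∞) * (m : ℝ≥0∞) :=
          le_trans hc (mul_le_mul_right hcm _)
        have hchain : (complexity (sadicSubshift τ) M : ℝ≥0∞) * (m : ℝ≥0∞)
            ≤ ((ε : ℝ≥0∞) * ((M : ℝ≥0∞)) ^ 2) * (m : ℝ≥0∞) := by
          calc (complexity (sadicSubshift τ) M : ℝ≥0∞) * (m : ℝ≥0∞)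
              ≤ 16 * ((M : ℝ≥0∞)) ^ 2 := hcast
            _ ≤ ((ε : ℝ≥0∞) * (m : ℝ≥0∞)) * ((M : ℝ≥0∞)) ^ 2 :=
                mul_le_mul_left h16 _
            _ = ((ε : ℝ≥0∞) * ((M : ℝ≥0∞)) ^ 2) * (m : ℝ≥0∞) := by ring
        have hmne : (m : ℝ≥0∞) ≠ 0 := by
          simp only [ne_eq, Nat.cast_eq_zero]
          omega
        exact (ENNReal.mul_le_mul_iff_left hmne (ENNReal.natCast_ne_top m)).mp hchain
      refine ENNReal.le_of_forall_pos_le_add fun ε hε _ => ?_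
      simpa using key ε hε
    · -- bounded case
      push_neg at hbd
      obtain ⟨b, hb⟩ := hbd
      refine liminf_zero_of_bounded_lang _ b fun w hw => ?_
      obtain ⟨n, a, hinf⟩ := lang_infix_compSeq τ hw
      obtain ⟨a', ha'⟩ := hb (n+1)
      have hpin : compSeq τ n a <:+: compSeq τ (n+1) a' := by
        rw [compSeq_succ]
        exact infix_wordImage_of_mem _ (hpos (n+1) (Nat.le_add_left 1 n) a' a)
      have := hinf.length_le
      have := hpin.length_le
      omega
  · -- some alphabet is empty
    push_neg at hA
    obtain ⟨n₀, hn₀⟩ := hA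
    have hprop : ∀ k, ¬ Nonempty (A (n₀ + k)) := by
      intro k
      induction k with
      | zero => simpa using hn₀
      | succ k ih =>
        rintro ⟨a⟩
        obtain ⟨c, hc⟩ := List.exists_mem_of_ne_nil _ (hne (n₀ + k) a)
        exact ih ⟨c⟩
    set Bm := Finset.sup (Finset.range n₀)
      (fun n => Finset.univ.sup (fun a : A (n+1) => (compSeq τ n a).length)) with hBm
    refine liminf_zero_of_bounded_lang _ Bm fun w hw => ?_
    obtain ⟨n, a, hinf⟩ := lang_infix_compSeq τ hw
    have hn : n < n₀ := by
      by_contra hcon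
      push_neg at hcon
      have := hprop (n + 1 - n₀)
      rw [show n₀ + (n + 1 - n₀) = n + 1 from by omega] at this
      exact this ⟨a⟩
    calc w.length ≤ (compSeq τ n a).length := hinf.length_le
      _ ≤ Finset.univ.sup (fun a : A (n+1) => (compSeq τ n a).length) :=
          Finset.le_sup (f := fun a : A (n+1) => (compSeq τ n a).length) (Finset.mem_univ a)
      _ ≤ Bm := Finset.le_sup
          (f := fun n => Finset.univ.sup (fun a : A (n+1) => (compSeq τ n a).length))
          (Finset.mem_range.mpr hn)
end
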